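/- If the critical set C_{A,a} = {(x,u) ∈ U(A) : ∂Φ/∂tᵢ(x,u) = 0, i = 1,…,k} is nonempty, then it is a smooth n-dimensional complex submanifold of U(A) ⊂ ℂ^n × ℂ^k: at every point of C_{A,a}, the k×n matrix (∂²Φ/∂zⱼ∂tᵢ) has rank k. -/

import Mathlib

/-- Smoothness of the critical set: at every point `(x,u)` of the critical set
`C_{A,a}`, the `k × n` matrix `(∂²Φ/∂zⱼ∂tᵢ) = (−bⱼⁱ aⱼ/fⱼ²)` has rank `k`
(hence, if nonempty, `C_{A,a}` is a smooth `n`-dimensional submanifold of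
`U(A) ⊂ ℂⁿ × ℂᵏ`). -/
theorem stmt_11 (n k : ℕ) (b : Fin n → Fin k → ℂ) (a : Fin n → ℂ)
    (ha : ∀ j, a j ≠ 0)
    (hspan : ∀ t : Fin k → ℂ, (∀ j, ∑ i, b j i * t i = 0) → t = 0)
    (x : Fin n → ℂ) (u : Fin k → ℂ) (f : Fin n → ℂ)
    (hf : ∀ j, f j = (∑ i, b j i * u i) + x j)
    (hne : ∀ j, f j ≠ 0)
    (hcrit : ∀ i, ∑ j, b j i * (a j / f j) = 0) :
    (Matrix.of fun (i : Fin k) (j : Fin n) => -(b j i * a j / (f j) ^ 2)).rank = k := by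
  set M : Matrix (Fin k) (Fin n) ℂ :=
    Matrix.of fun (i : Fin k) (j : Fin n) => -(b j i * a j / (f j) ^ 2) with hM
  rw [← Matrix.rank_transpose]
  have hinj : Function.Injective ((M.transpose).mulVecLin) := by
    rw [← LinearMap.ker_eq_bot, LinearMap.ker_eq_bot']
    intro t ht
    apply hspan
    intro j
    have hj : (M.transpose).mulVec t j = 0 := by
      have := congrFun ht j
      exact this
    have : (M.transpose).mulVec t j = -(a j / (f j) ^ 2) * ∑ i, b j i * t i := by
      simp only [Matrix.mulVec, dotProduct, Matrix.transpose_apply, hM,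
        Matrix.of_apply, Finset.mul_sum]
      apply Finset.sum_congr rfl
      intro i _
      ring
    rw [this] at hj
    have hc : -(a j / (f j) ^ 2) ≠ 0 := by
      simp [div_eq_zero_iff, ha j, pow_eq_zero_iff, hne j]
    exact (mul_eq_zero.mp hj).resolve_left hc
  have := LinearMap.finrank_range_of_inj hinj
  rw [Matrix.rank, this]
  simp [Module.finrank_pi]
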